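/- Let A be a finite set with |A| ≥ 2, let n ≥ 4, and let f ∈ Sym(A^n) be any permutation. Then the permutation f ⊕ id of A^{n+1} (which applies f to the first n coordinates and fixes the last coordinate) belongs to the subgroup of Sym(A^{n+1}) generated by all extensions to arity n+1 of permutations of A^4. (In other words, every permutation is computable from a finite gate set using one borrowed bit.) -/

import Mathlib

/-- The wire permutation `π_α` of `A^n` induced by `α ∈ S_n`: `π_α(x) i = x (α⁻¹ i)`. -/
def wirePerm {A : Type*} {n : ℕ} (α : Equiv.Perm (Fin n)) : Equiv.Perm (Fin n → A) :=
  Equiv.arrowCongr α (Equiv.refl A)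

/-- Splitting `A^(k+ℓ)` into `A^k × A^ℓ`. -/
def splitEquiv (A : Type*) (k ℓ : ℕ) : (Fin (k + ℓ) → A) ≃ (Fin k → A) × (Fin ℓ → A) :=
  (Equiv.arrowCongr finSumFinEquiv.symm (Equiv.refl A)).trans
    (Equiv.sumArrowEquivProdArrow _ _ A)

/-- `f ⊕ id`: the permutation of `A^n` acting as `f` on the first `ℓ` coordinates and
fixing the remaining ones. -/
def oplusId {A : Type*} {ℓ n : ℕ} (h : ℓ ≤ n) (f : Equiv.Perm (Fin ℓ → A)) :
    Equiv.Perm (Fin n → A) :=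
  (((Equiv.arrowCongr (finCongr (Nat.add_sub_cancel' h).symm) (Equiv.refl A)).trans
    (splitEquiv A ℓ (n - ℓ))).symm).permCongr
      (Equiv.prodCongr f (Equiv.refl (Fin (n - ℓ) → A)))

/-- `g ∈ Sym(A^n)` is an extension of `f ∈ Sym(A^ℓ)` iff it is a conjugate of `f ⊕ id`
by a wire permutation. -/
def IsExtensionOf {A : Type*} {ℓ n : ℕ} (f : Equiv.Perm (Fin ℓ → A))
    (g : Equiv.Perm (Fin n → A)) : Prop :=
  ∃ (h : ℓ ≤ n) (α : Equiv.Perm (Fin n)),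
    g = wirePerm α * oplusId h f * (wirePerm α)⁻¹

open Equiv Function
open scoped commutatorElement

section Basic
variable {A : Type*}

lemma wirePerm_apply {N : ℕ} (α : Perm (Fin N)) (x : Fin N → A) (i : Fin N) :
    wirePerm α x i = x (α.symm i) := rfl

lemma wirePerm_inv_apply {N : ℕ} (α : Perm (Fin N)) (x : Fin N → A) (i : Fin N) :
    (wirePerm α)⁻¹ x i = x (α i) := rfl

lemma wirePerm_one {N : ℕ} : (wirePerm (1 : Perm (Fin N)) : Perm (Fin N → A)) = 1 := by
  ext x i
  rfl

variable {ℓ n : ℕ} (h : ℓ ≤ n)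

private def Fsplit : (Fin n → A) ≃ (Fin ℓ → A) × (Fin (n - ℓ) → A) :=
  ((Equiv.arrowCongr (finCongr (Nat.add_sub_cancel' h).symm) (Equiv.refl A)).trans
    (splitEquiv A ℓ (n - ℓ)))

lemma oplusId_eq (f : Perm (Fin ℓ → A)) (x : Fin n → A) :
    oplusId h f x = (Fsplit h).symm (f ((Fsplit h) x).1, ((Fsplit h) x).2) := rfl

lemma Fsplit_fst (y : Fin n → A) (j : Fin ℓ) :
    ((Fsplit h) y).1 j = y (Fin.castLE h j) := by
  show y ((finCongr (Nat.add_sub_cancel' h).symm).symm (finSumFinEquiv (Sum.inl j))) = _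
  congr 1

lemma Fsplit_snd (y : Fin n → A) (j : Fin (n - ℓ)) :
    ((Fsplit h) y).2 j = y ⟨ℓ + (j : ℕ), by omega⟩ := by
  show y ((finCongr (Nat.add_sub_cancel' h).symm).symm (finSumFinEquiv (Sum.inr j))) = _
  congr 1

lemma oplusId_apply_lt (f : Perm (Fin ℓ → A)) (x : Fin n → A) (j : Fin ℓ) :
    oplusId h f x (Fin.castLE h j) = f (fun k => x (Fin.castLE h k)) j := by
  have h1 : (Fsplit h) (oplusId h f x) = (f (((Fsplit h) x).1), ((Fsplit h) x).2) := by
    rw [oplusId_eq, Equiv.apply_symm_apply]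
  have h2 := congrFun (congrArg Prod.fst h1) j
  rw [Fsplit_fst] at h2
  rw [h2]
  congr 1

lemma oplusId_apply_ge (f : Perm (Fin ℓ → A)) (x : Fin n → A) (i : Fin n)
    (hi : ℓ ≤ (i : ℕ)) : oplusId h f x i = x i := by
  have h1 : (Fsplit h) (oplusId h f x) = (f (((Fsplit h) x).1), ((Fsplit h) x).2) := by
    rw [oplusId_eq, Equiv.apply_symm_apply]
  have hj : (i : ℕ) - ℓ < n - ℓ := by omega
  have h2 := congrFun (congrArg Prod.snd h1) ⟨(i : ℕ) - ℓ, hj⟩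
  rw [Fsplit_snd, Fsplit_snd] at h2
  have he : (⟨ℓ + ((i : ℕ) - ℓ), by omega⟩ : Fin n) = i := by
    ext; simp; omega
  rwa [he] at h2

lemma oplusId_apply (f : Perm (Fin ℓ → A)) (x : Fin n → A) (i : Fin n) :
    oplusId h f x i =
      if hi : (i : ℕ) < ℓ then f (fun k => x (Fin.castLE h k)) ⟨i, hi⟩ else x i := by
  split
  · next hi =>
    have h2 := oplusId_apply_lt h f x ⟨(i : ℕ), hi⟩
    have he : Fin.castLE h ⟨(i : ℕ), hi⟩ = i := by ext; rfl
    rwa [he] at h2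
  · next hi => exact oplusId_apply_ge h f x i (by omega)

end Basic
section Part2
open Equiv Function Equiv.Perm

variable {A : Type*} [Fintype A] [DecidableEq A]

lemma sign_oplusId {ℓ n : ℕ} (h : ℓ ≤ n) (f : Perm (Fin ℓ → A)) :
    Perm.sign (oplusId h f) = Perm.sign f ^ (Fintype.card A ^ (n - ℓ)) := by
  unfold oplusId
  rw [Equiv.Perm.sign_permCongr]
  rw [Equiv.prodCongr_refl_right]
  rw [Equiv.Perm.sign_prodCongrLeft]
  rw [Finset.prod_const]
  congr 1
  simp [Finset.card_univ]

/-- Any injective pair of enumerations is linked by a permutation. -/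
lemma exists_perm_comp {γ : Type*} [Fintype γ] [DecidableEq γ] {m : ℕ} (f g : Fin m → γ)
    (hf : Injective f) (hg : Injective g) : ∃ σ : Perm γ, ∀ k, σ (f k) = g k := by
  classical
  have hc : Fintype.card (↥(Set.range f)ᶜ) = Fintype.card (↥(Set.range g)ᶜ) := by
    rw [Fintype.card_compl_set, Fintype.card_compl_set,
      Set.card_range_of_injective hf, Set.card_range_of_injective hg]
  refine ⟨((Equiv.Set.sumCompl (Set.range f)).symm.trans
      ((((Equiv.ofInjective f hf).symm.trans (Equiv.ofInjective g hg)).sumCongr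
        (Fintype.equivOfCardEq hc)).trans (Equiv.Set.sumCompl (Set.range g)))), ?_⟩
  intro k
  simp only [Equiv.trans_apply]
  rw [Equiv.Set.sumCompl_symm_apply_of_mem (Set.mem_range_self k)]
  simp only [Equiv.sumCongr_apply, Sum.map_inl, Equiv.trans_apply]
  have h1 : (Equiv.ofInjective f hf).symm ⟨f k, Set.mem_range_self k⟩ = k := by
    apply hf
    simp [Equiv.apply_ofInjective_symm hf]
  rw [h1]
  simp [Equiv.Set.sumCompl_apply_inl]

end Part2
section Part3
open Equiv Function Equiv.Perm

set_option linter.unusedSectionVars false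
variable {A : Type*} [Fintype A] [DecidableEq A]

/-- The subgroup generated by arity-`N` extensions of 4-ary permutations. -/
def Hgrp (A : Type*) (N : ℕ) : Subgroup (Perm (Fin N → A)) :=
  Subgroup.closure {g : Perm (Fin N → A) | ∃ p : Perm (Fin 4 → A), IsExtensionOf p g}

variable {N : ℕ}

/-- A permutation of `Fin N` placing `Fin 4` (via castLE) onto an injective tuple `w`. -/
noncomputable def placePerm (hN : 4 ≤ N) (w : Fin 4 → Fin N) (hw : Injective w) :
    Perm (Fin N) :=
  (exists_perm_comp (fun k => Fin.castLE hN k) w (Fin.castLE_injective hN) hw).choose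

lemma placePerm_spec (hN : 4 ≤ N) (w : Fin 4 → Fin N) (hw : Injective w) (k : Fin 4) :
    placePerm hN w hw (Fin.castLE hN k) = w k :=
  (exists_perm_comp (fun k => Fin.castLE hN k) w (Fin.castLE_injective hN) hw).choose_spec k

/-- Apply a 4-ary gate at the four wires given by `w`. -/
noncomputable def applyAt (hN : 4 ≤ N) (w : Fin 4 → Fin N) (hw : Injective w)
    (q : Perm (Fin 4 → A)) : Perm (Fin N → A) :=
  wirePerm (placePerm hN w hw) * oplusId hN q * (wirePerm (placePerm hN w hw))⁻¹

lemma applyAt_mem (hN : 4 ≤ N) (w : Fin 4 → Fin N) (hw : Injective w)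
    (q : Perm (Fin 4 → A)) : applyAt hN w hw q ∈ Hgrp A N :=
  Subgroup.subset_closure ⟨q, hN, placePerm hN w hw, rfl⟩

lemma applyAt_apply_at (hN : 4 ≤ N) (w : Fin 4 → Fin N) (hw : Injective w)
    (q : Perm (Fin 4 → A)) (x : Fin N → A) (k : Fin 4) :
    applyAt hN w hw q x (w k) = q (x ∘ w) k := by
  set α := placePerm hN w hw with hα
  have hkey : ∀ i : Fin N, applyAt hN w hw q x i = oplusId hN q (x ∘ α) (α.symm i) := by
    intro i; rfl
  rw [hkey]
  have hsymm : α.symm (w k) = Fin.castLE hN k := by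
    rw [← placePerm_spec hN w hw k, ← hα, Equiv.symm_apply_apply]
  rw [hsymm, oplusId_apply_lt]
  have harg : (fun k' => (x ∘ ⇑α) (Fin.castLE hN k')) = x ∘ w := by
    funext k'
    simp only [Function.comp_apply]
    rw [hα, placePerm_spec hN w hw k']
  rw [harg]

lemma applyAt_apply_notMem (hN : 4 ≤ N) (w : Fin 4 → Fin N) (hw : Injective w)
    (q : Perm (Fin 4 → A)) (x : Fin N → A) (i : Fin N) (hi : i ∉ Set.range w) :
    applyAt hN w hw q x i = x i := by
  set α := placePerm hN w hw with hα
  have hkey : applyAt hN w hw q x i = oplusId hN q (x ∘ α) (α.symm i) := rfl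
  rw [hkey]
  have hge : 4 ≤ ((α.symm i : Fin N) : ℕ) := by
    by_contra hlt
    push_neg at hlt
    have : i = w ⟨(α.symm i : ℕ), hlt⟩ := by
      rw [← placePerm_spec hN w hw ⟨(α.symm i : ℕ), hlt⟩, ← hα]
      have : Fin.castLE hN ⟨((α.symm i : Fin N) : ℕ), hlt⟩ = α.symm i := by ext; rfl
      rw [this, Equiv.apply_symm_apply]
    exact hi ⟨_, this.symm⟩
  rw [oplusId_apply_ge _ _ _ _ hge]
  simp only [Function.comp_apply]
  rw [Equiv.apply_symm_apply]

/-- Any permutation supported on 4 wires and acting only through them is in `Hgrp`. -/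
lemma local4_mem (hN : 4 ≤ N) (a0 : A) (G : Perm (Fin N → A)) (w : Fin 4 → Fin N)
    (hw : Injective w)
    (hfix : ∀ (x : Fin N → A) (i : Fin N), i ∉ Set.range w → G x i = x i)
    (hdet : ∀ x y : Fin N → A, x ∘ w = y ∘ w → (G x) ∘ w = (G y) ∘ w) :
    G ∈ Hgrp A N := by
  classical
  -- glue a window value to the default background
  let glue : (Fin 4 → A) → (Fin N → A) := fun u i =>
    if hh : ∃ k, w k = i then u hh.choose else a0
  have hglue : ∀ u, glue u ∘ w = u := by
    intro u
    funext k
    have hh : ∃ k', w k' = w k := ⟨k, rfl⟩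
    simp only [glue, Function.comp_apply, dif_pos hh]
    congr 1
    exact hw hh.choose_spec
  have hglue_out : ∀ u i, i ∉ Set.range w → glue u i = a0 := by
    intro u i hi
    have : ¬ ∃ k, w k = i := by
      rintro ⟨k, rfl⟩; exact hi ⟨k, rfl⟩
    simp only [glue, dif_neg this]
  have hqinj : Injective (fun u => (G (glue u)) ∘ w) := by
    intro u1 u2 heq
    have h1 : G (glue u1) = G (glue u2) := by
      funext i
      by_cases hi : i ∈ Set.range w
      · obtain ⟨k, rfl⟩ := hi
        exact congrFun heq k
      · rw [hfix _ _ hi, hfix _ _ hi, hglue_out _ _ hi, hglue_out _ _ hi]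
    have h2 : glue u1 = glue u2 := G.injective h1
    rw [← hglue u1, ← hglue u2, h2]
  let q : Perm (Fin 4 → A) :=
    Equiv.ofBijective _ (Finite.injective_iff_bijective.mp hqinj)
  have hq : ∀ u, q u = (G (glue u)) ∘ w := fun u => rfl
  have hG : G = applyAt hN w hw q := by
    ext x i
    by_cases hi : i ∈ Set.range w
    · obtain ⟨k, rfl⟩ := hi
      rw [applyAt_apply_at, hq]
      have hd : (G (glue (x ∘ w))) ∘ w = (G x) ∘ w := hdet _ _ (hglue (x ∘ w))
      exact (congrFun hd k).symm
    · rw [applyAt_apply_notMem _ _ _ _ _ _ hi, hfix _ _ hi]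
  rw [hG]
  exact applyAt_mem hN w hw q

end Part3
section Part4
open Equiv Function Equiv.Perm
open scoped Classical

set_option linter.unusedSectionVars false

variable {β ρ : Type*}

/-- Controlled gate on a product: apply `Y` to the first factor iff the second is in `E`. -/
noncomputable def DGate (E : ρ → Prop) (Y : Perm β) : Perm (β × ρ) :=
  Equiv.prodCongrLeft (fun r => if E r then Y else 1)

lemma DGate_apply (E : ρ → Prop) (Y : Perm β) (b : β) (r : ρ) :
    DGate E Y (b, r) = (if E r then Y b else b, r) := by
  simp only [DGate, Equiv.prodCongrLeft_apply]
  by_cases hE : E r <;> simp [hE]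

lemma DGate_one (E : ρ → Prop) : DGate E (1 : Perm β) = 1 := by
  ext ⟨b, r⟩ <;> simp [DGate_apply]

lemma DGate_mul (E : ρ → Prop) (Y Y' : Perm β) :
    DGate E (Y * Y') = DGate E Y * DGate E Y' := by
  ext ⟨b, r⟩
  · simp only [Perm.mul_apply, DGate_apply]
    by_cases hE : E r <;> simp [hE, Perm.mul_apply]
  · simp only [Perm.mul_apply, DGate_apply]

lemma DGate_inv (E : ρ → Prop) (Y : Perm β) : (DGate E Y)⁻¹ = DGate E Y⁻¹ := by
  have h : DGate E Y * DGate E Y⁻¹ = 1 := by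
    rw [← DGate_mul, mul_inv_cancel, DGate_one]
  exact inv_eq_of_mul_eq_one_right h

lemma DGate_commutator (E₁ E₂ : ρ → Prop) (P Q : Perm β) :
    ⁅DGate E₁ P, DGate E₂ Q⁆ = DGate (fun r => E₁ r ∧ E₂ r) ⁅P, Q⁆ := by
  rw [commutatorElement_def, commutatorElement_def, DGate_inv, DGate_inv]
  ext ⟨b, r⟩
  · simp only [Perm.mul_apply, DGate_apply]
    by_cases hE₁ : E₁ r <;> by_cases hE₂ : E₂ r <;>
      simp [hE₁, hE₂, Perm.mul_apply]
  · simp only [Perm.mul_apply, DGate_apply]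

lemma permCongr_mul {α γ : Type*} (e : α ≃ γ) (p q : Perm α) :
    e.permCongr (p * q) = e.permCongr p * e.permCongr q := by
  ext x
  simp [Equiv.permCongr_apply, Perm.mul_apply]

lemma permCongr_one {α γ : Type*} (e : α ≃ γ) :
    e.permCongr (1 : Perm α) = 1 := by
  ext x
  simp [Equiv.permCongr_apply]

lemma permCongr_inv {α γ : Type*} (e : α ≃ γ) (p : Perm α) :
    (e.permCongr p)⁻¹ = e.permCongr p⁻¹ := by
  have h : e.permCongr p * e.permCongr p⁻¹ = 1 := by
    rw [← _root_.permCongr_mul, mul_inv_cancel, permCongr_one]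
  exact inv_eq_of_mul_eq_one_right h

end Part4

section Part5
open Equiv Function Equiv.Perm
open scoped Classical

set_option linter.unusedSectionVars false

variable {A : Type*} [Fintype A] [DecidableEq A] {N : ℕ}

/-- The split of `A^N` along a window `s`. -/
def eSplit (A : Type*) {N : ℕ} (s : Finset (Fin N)) :
    (Fin N → A) ≃ ({ i // i ∈ s } → A) × ({ i // ¬ i ∈ s } → A) :=
  Equiv.piEquivPiSubtypeProd (· ∈ s) (fun _ => A)

/-- Controlled gate on `A^N`: apply `Y` to the window `s` iff the rest lies in `E`. -/
noncomputable def CGate (s : Finset (Fin N))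
    (E : ({ i // ¬ i ∈ s } → A) → Prop) (Y : Perm ({ i // i ∈ s } → A)) :
    Perm (Fin N → A) :=
  ((eSplit A s).symm).permCongr (DGate E Y)

lemma CGate_apply (s : Finset (Fin N)) (E : ({ i // ¬ i ∈ s } → A) → Prop)
    (Y : Perm ({ i // i ∈ s } → A)) (x : Fin N → A) :
    CGate s E Y x = (eSplit A s).symm
      (if E (fun j => x j) then Y (fun j => x j) else (fun j => x j), fun j => x j) := by
  show (eSplit A s).symm (DGate E Y ((eSplit A s) x)) = _
  have hx : (eSplit A s) x =
      (fun (j : { i // i ∈ s }) => x j.1, fun (j : { i // ¬ i ∈ s }) => x j.1) := rfl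
  rw [hx, DGate_apply]

lemma CGate_apply_mem (s : Finset (Fin N)) (E : ({ i // ¬ i ∈ s } → A) → Prop)
    (Y : Perm ({ i // i ∈ s } → A)) (x : Fin N → A) {i : Fin N} (hi : i ∈ s) :
    CGate s E Y x i =
      if E (fun j => x j) then Y (fun j => x j) ⟨i, hi⟩ else x i := by
  rw [CGate_apply]
  by_cases hE : E (fun j => x j) <;>
    simp [hE, eSplit, Equiv.piEquivPiSubtypeProd, hi]

lemma CGate_apply_notMem (s : Finset (Fin N)) (E : ({ i // ¬ i ∈ s } → A) → Prop)
    (Y : Perm ({ i // i ∈ s } → A)) (x : Fin N → A) {i : Fin N} (hi : ¬ i ∈ s) :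
    CGate s E Y x i = x i := by
  rw [CGate_apply]
  by_cases hE : E (fun j => x j) <;>
    simp [hE, eSplit, Equiv.piEquivPiSubtypeProd, hi]

lemma CGate_mul (s : Finset (Fin N)) (E : ({ i // ¬ i ∈ s } → A) → Prop)
    (Y Y' : Perm ({ i // i ∈ s } → A)) :
    CGate s E (Y * Y') = CGate s E Y * CGate s E Y' := by
  unfold CGate
  rw [DGate_mul, _root_.permCongr_mul]

lemma CGate_one (s : Finset (Fin N)) (E : ({ i // ¬ i ∈ s } → A) → Prop) :
    CGate s E (1 : Perm ({ i // i ∈ s } → A)) = 1 := by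
  unfold CGate
  rw [DGate_one, permCongr_one]

lemma CGate_inv (s : Finset (Fin N)) (E : ({ i // ¬ i ∈ s } → A) → Prop)
    (Y : Perm ({ i // i ∈ s } → A)) : (CGate s E Y)⁻¹ = CGate s E Y⁻¹ := by
  unfold CGate
  rw [permCongr_inv, DGate_inv]

lemma CGate_commutator (s : Finset (Fin N)) (E₁ E₂ : ({ i // ¬ i ∈ s } → A) → Prop)
    (P Q : Perm ({ i // i ∈ s } → A)) :
    ⁅CGate s E₁ P, CGate s E₂ Q⁆ = CGate s (fun r => E₁ r ∧ E₂ r) ⁅P, Q⁆ := by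
  unfold CGate
  rw [commutatorElement_def, commutatorElement_def, permCongr_inv, permCongr_inv,
    ← _root_.permCongr_mul, ← _root_.permCongr_mul, ← _root_.permCongr_mul]
  have h := DGate_commutator E₁ E₂ P Q
  rw [commutatorElement_def, commutatorElement_def] at h
  rw [h]

lemma CGate_congr (s : Finset (Fin N)) {E₁ E₂ : ({ i // ¬ i ∈ s } → A) → Prop}
    (h : ∀ r, E₁ r ↔ E₂ r) (Y : Perm ({ i // i ∈ s } → A)) :
    CGate s E₁ Y = CGate s E₂ Y := by
  have : E₁ = E₂ := funext fun r => propext (h r)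
  rw [this]

end Part5
section Part6
open Equiv Function Equiv.Perm

variable {γ : Type*} [DecidableEq γ]

/-- The 3-cycle `(a b c)`. -/
def cyc3 (a b c : γ) : Perm γ := Equiv.swap a c * Equiv.swap a b

variable {a b c : γ}

lemma cyc3_apply_fst (hab : a ≠ b) (hbc : b ≠ c) : cyc3 a b c a = b := by
  simp only [cyc3, Perm.mul_apply, Equiv.swap_apply_left]
  exact Equiv.swap_apply_of_ne_of_ne hab.symm hbc

lemma cyc3_apply_snd (hab : a ≠ b) : cyc3 a b c b = c := by
  simp only [cyc3, Perm.mul_apply]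
  rw [Equiv.swap_apply_right, Equiv.swap_apply_left]

lemma cyc3_apply_trd (hbc : b ≠ c) (hca : c ≠ a) : cyc3 a b c c = a := by
  simp only [cyc3, Perm.mul_apply]
  rw [Equiv.swap_apply_of_ne_of_ne hca hbc.symm, Equiv.swap_apply_right]

lemma cyc3_apply_of_ne {x : γ} (hxa : x ≠ a) (hxb : x ≠ b) (hxc : x ≠ c) :
    cyc3 a b c x = x := by
  simp only [cyc3, Perm.mul_apply]
  rw [Equiv.swap_apply_of_ne_of_ne hxa hxb, Equiv.swap_apply_of_ne_of_ne hxa hxc]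

lemma cyc3_isThreeCycle [Fintype γ] (hab : a ≠ b) (hbc : b ≠ c) (hca : c ≠ a) :
    Equiv.Perm.IsThreeCycle (cyc3 a b c) :=
  Equiv.Perm.isThreeCycle_swap_mul_swap_same hca.symm hab (Ne.symm hbc)

lemma cyc3_conj (σ : Perm γ) (a b c : γ) :
    σ * cyc3 a b c * σ⁻¹ = cyc3 (σ a) (σ b) (σ c) := by
  unfold cyc3
  rw [Equiv.swap_apply_apply, Equiv.swap_apply_apply]
  group

lemma cyc3_commutator {d : γ} (hab : a ≠ b) (hbc : b ≠ c) (hca : c ≠ a)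
    (hda : d ≠ a) (hdb : d ≠ b) (hdc : d ≠ c) :
    cyc3 a b c = ⁅Equiv.swap b c, cyc3 a d b⁆ := by
  rw [commutatorElement_def]
  have e1 : Equiv.swap b c a = a := Equiv.swap_apply_of_ne_of_ne hab (Ne.symm hca)
  have e2 : Equiv.swap b c d = d := Equiv.swap_apply_of_ne_of_ne hdb hdc
  have h1 : Equiv.swap b c * cyc3 a d b * (Equiv.swap b c)⁻¹ = cyc3 a d c := by
    rw [cyc3_conj, e1, e2, Equiv.swap_apply_left]
  rw [h1]
  have h2 : (cyc3 a d b)⁻¹ = Equiv.swap a d * Equiv.swap a b := by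
    unfold cyc3
    rw [mul_inv_rev, Equiv.swap_inv, Equiv.swap_inv]
  rw [h2]
  unfold cyc3
  rw [mul_assoc, Equiv.swap_mul_self_mul]

lemma exists_fourth [Fintype γ] (h4 : 4 ≤ Fintype.card γ) (a b c : γ) :
    ∃ d : γ, d ≠ a ∧ d ≠ b ∧ d ≠ c := by
  have hcard : ({a, b, c} : Finset γ).card ≤ 3 := by
    apply le_trans (Finset.card_insert_le _ _)
    apply Nat.succ_le_succ
    apply le_trans (Finset.card_insert_le _ _)
    apply Nat.succ_le_succ
    simp
  have hne : (Finset.univ \ ({a, b, c} : Finset γ)).Nonempty := by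
    apply Finset.card_pos.mp
    have := Finset.le_card_sdiff ({a, b, c} : Finset γ) Finset.univ
    have hu : Fintype.card γ = Finset.univ.card := (Finset.card_univ).symm
    omega
  obtain ⟨d, hd⟩ := hne
  simp only [Finset.mem_sdiff, Finset.mem_insert, Finset.mem_singleton] at hd
  push_neg at hd
  exact ⟨d, hd.2.1, hd.2.2.1, hd.2.2.2⟩

lemma IsThreeCycle.exists_cyc3 [Fintype γ] {σ : Perm γ} (h : Equiv.Perm.IsThreeCycle σ) :
    ∃ a b c : γ, a ≠ b ∧ b ≠ c ∧ c ≠ a ∧ σ = cyc3 a b c := by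
  have hcard : σ.support.card = 3 := h.card_support
  obtain ⟨a, ha⟩ : σ.support.Nonempty := Finset.card_pos.mp (by omega)
  have ha' : σ a ≠ a := Equiv.Perm.mem_support.mp ha
  set b := σ a with hb
  have hb' : b ∈ σ.support := Equiv.Perm.apply_mem_support.mpr ha
  have hab : a ≠ b := Ne.symm ha'
  set c := σ b with hc
  have hc' : c ∈ σ.support := Equiv.Perm.apply_mem_support.mpr hb'
  have hbc : b ≠ c := Ne.symm (Equiv.Perm.mem_support.mp hb')
  have hca : c ≠ a := by
    intro hcaeq
    -- then σ b = a, σ a = b; find a third point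
    have hsub : ({a, b} : Finset γ) ⊆ σ.support := by
      intro x hx
      simp only [Finset.mem_insert, Finset.mem_singleton] at hx
      rcases hx with rfl | rfl
      · exact ha
      · exact hb'
    have h2 : ({a, b} : Finset γ).card = 2 := Finset.card_pair hab
    have : (σ.support \ {a, b}).Nonempty := by
      apply Finset.card_pos.mp
      have := Finset.le_card_sdiff ({a, b} : Finset γ) σ.support
      omega
    obtain ⟨d, hd⟩ := this
    simp only [Finset.mem_sdiff, Finset.mem_insert, Finset.mem_singleton] at hd
    push_neg at hd
    obtain ⟨hdsupp, hda, hdb⟩ := hd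
    have habd : ({a, b, d} : Finset γ).card = 3 := by
      rw [Finset.card_insert_of_notMem (by simp [hab, Ne.symm hda]),
        Finset.card_insert_of_notMem (by simp [Ne.symm hdb]), Finset.card_singleton]
    have hsupp_eq : σ.support = {a, b, d} := by
      apply (Finset.eq_of_subset_of_card_le _ _).symm
      · intro x hx
        simp only [Finset.mem_insert, Finset.mem_singleton] at hx
        rcases hx with rfl | rfl | rfl
        · exact ha
        · exact hb'
        · exact hdsupp
      · rw [hcard, habd]
    have hσd : σ d ∈ σ.support := Equiv.Perm.apply_mem_support.mpr hdsupp
    rw [hsupp_eq] at hσd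
    simp only [Finset.mem_insert, Finset.mem_singleton] at hσd
    rcases hσd with h' | h' | h'
    · -- σ d = a = c = σ b
      have : d = b := σ.injective (by rw [h']; exact hcaeq ▸ hc)
      exact hdb this
    · -- σ d = b = σ a
      have : d = a := σ.injective (by rw [h', hb])
      exact hda this
    · exact (Equiv.Perm.mem_support.mp hdsupp) h'
  -- support = {a, b, c}
  have habc : ({a, b, c} : Finset γ).card = 3 := by
    rw [Finset.card_insert_of_notMem (by simp [hab, Ne.symm hca]),
      Finset.card_insert_of_notMem (by simp [hbc]), Finset.card_singleton]
  have hsupp_eq : σ.support = {a, b, c} := by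
    apply (Finset.eq_of_subset_of_card_le _ _).symm
    · intro x hx
      simp only [Finset.mem_insert, Finset.mem_singleton] at hx
      rcases hx with rfl | rfl | rfl
      · exact ha
      · exact hb'
      · exact hc'
    · rw [hcard, habc]
  have hσc : σ c = a := by
    have hmem : σ c ∈ σ.support := Equiv.Perm.apply_mem_support.mpr hc'
    rw [hsupp_eq] at hmem
    simp only [Finset.mem_insert, Finset.mem_singleton] at hmem
    rcases hmem with h' | h' | h'
    · exact h'
    · exact absurd (σ.injective (by rw [h', hb])) hca
    · exact absurd h' (Equiv.Perm.mem_support.mp hc')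
  refine ⟨a, b, c, hab, hbc, hca, ?_⟩
  ext x
  by_cases hxa : x = a
  · subst hxa; rw [cyc3_apply_fst hab hbc]
  by_cases hxb : x = b
  · subst hxb; rw [cyc3_apply_snd hab]
  by_cases hxc : x = c
  · subst hxc; rw [cyc3_apply_trd hbc hca]; exact hσc
  · rw [cyc3_apply_of_ne hxa hxb hxc]
    by_contra hne
    have : x ∈ σ.support := Equiv.Perm.mem_support.mpr hne
    rw [hsupp_eq] at this
    simp only [Finset.mem_insert, Finset.mem_singleton] at this
    tauto

end Part6
section Part7
open Equiv Function Equiv.Perm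
open scoped Classical

set_option linter.unusedSectionVars false
set_option linter.unusedVariables false

variable {A : Type*} [Fintype A] [DecidableEq A] {N : ℕ}

lemma CGate_base (hN4 : 4 ≤ N) (a0 : A) (s : Finset (Fin N)) (hs : s.card = 3)
    (E : ({ i // ¬ i ∈ s } → A) → Prop) (c : Fin N) (hc : ¬ c ∈ s)
    (hE : ∀ r r' : ({ i // ¬ i ∈ s } → A), r ⟨c, hc⟩ = r' ⟨c, hc⟩ → (E r ↔ E r'))
    (Y : Perm ({ i // i ∈ s } → A)) : CGate s E Y ∈ Hgrp A N := by
  obtain ⟨t₀, t₁, t₂, h01, h02, h12, hs3⟩ := Finset.card_eq_three.mp hs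
  have ht₀ : t₀ ∈ s := by rw [hs3]; simp
  have ht₁ : t₁ ∈ s := by rw [hs3]; simp
  have ht₂ : t₂ ∈ s := by rw [hs3]; simp
  have hct₀ : c ≠ t₀ := fun h => hc (h ▸ ht₀)
  have hct₁ : c ≠ t₁ := fun h => hc (h ▸ ht₁)
  have hct₂ : c ≠ t₂ := fun h => hc (h ▸ ht₂)
  set w : Fin 4 → Fin N := ![t₀, t₁, t₂, c] with hwdef
  have hw0 : w 0 = t₀ := rfl
  have hw1 : w 1 = t₁ := rfl
  have hw2 : w 2 = t₂ := rfl
  have hw3 : w 3 = c := rfl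
  have hw : Injective w := by
    intro k k' hkk
    fin_cases k <;> fin_cases k' <;> simp_all [hwdef]
  apply local4_mem hN4 a0 _ w hw
  · intro x i hi
    apply CGate_apply_notMem
    intro his
    rw [hs3] at his
    simp only [Finset.mem_insert, Finset.mem_singleton] at his
    apply hi
    rcases his with rfl | rfl | rfl
    · exact ⟨0, rfl⟩
    · exact ⟨1, rfl⟩
    · exact ⟨2, rfl⟩
  · intro x y hxy
    have hx0 : x t₀ = y t₀ := congrFun hxy 0
    have hx1 : x t₁ = y t₁ := congrFun hxy 1
    have hx2 : x t₂ = y t₂ := congrFun hxy 2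
    have hx3 : x c = y c := congrFun hxy 3
    have hwin : (fun j : { i // i ∈ s } => x j.1) = (fun j => y j.1) := by
      funext j
      obtain ⟨i, hi⟩ := j
      rw [hs3] at hi
      simp only [Finset.mem_insert, Finset.mem_singleton] at hi
      rcases hi with rfl | rfl | rfl
      · exact hx0
      · exact hx1
      · exact hx2
    have hrest : E (fun j : { i // ¬ i ∈ s } => x j.1) ↔ E (fun j => y j.1) :=
      hE _ _ hx3
    funext k
    simp only [Function.comp_apply]
    fin_cases k
    · show CGate s E Y x (w 0) = CGate s E Y y (w 0)
      rw [hw0, CGate_apply_mem s E Y x ht₀, CGate_apply_mem s E Y y ht₀, hwin, hx0]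
      exact if_congr hrest rfl rfl
    · show CGate s E Y x (w 1) = CGate s E Y y (w 1)
      rw [hw1, CGate_apply_mem s E Y x ht₁, CGate_apply_mem s E Y y ht₁, hwin, hx1]
      exact if_congr hrest rfl rfl
    · show CGate s E Y x (w 2) = CGate s E Y y (w 2)
      rw [hw2, CGate_apply_mem s E Y x ht₂, CGate_apply_mem s E Y y ht₂, hwin, hx2]
      exact if_congr hrest rfl rfl
    · show CGate s E Y x (w 3) = CGate s E Y y (w 3)
      rw [hw3, CGate_apply_notMem s E Y x hc, CGate_apply_notMem s E Y y hc]
      exact hx3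

lemma CGate_mem_pattern (hN4 : 4 ≤ N) (a0 : A) (s : Finset (Fin N)) (hs : s.card = 3)
    (hβ : 4 ≤ Fintype.card ({ i // i ∈ s } → A)) :
    ∀ (m : ℕ) (S : Finset { i // ¬ i ∈ s }) (v : { i // ¬ i ∈ s } → A)
      (Y : Perm ({ i // i ∈ s } → A)), S.card ≤ m →
      (S.card ≤ 1 ∨ Equiv.Perm.sign Y = 1) →
      CGate s (fun r => ∀ q ∈ S, r q = v q) Y ∈ Hgrp A N := by
  have hbase : ∀ (S : Finset { i // ¬ i ∈ s }) (v : { i // ¬ i ∈ s } → A)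
      (Y : Perm ({ i // i ∈ s } → A)), S.card ≤ 1 →
      CGate s (fun r => ∀ q ∈ S, r q = v q) Y ∈ Hgrp A N := by
    intro S v Y hS1
    rcases S.eq_empty_or_nonempty with rfl | ⟨q₀, hq₀⟩
    · -- no controls; pick any wire outside s
      have hcompl : (sᶜ : Finset (Fin N)).Nonempty := by
        apply Finset.card_pos.mp
        rw [Finset.card_compl, hs]
        have : 4 ≤ Fintype.card (Fin N) := by simpa using hN4
        omega
      obtain ⟨c, hcm⟩ := hcompl
      have hc : ¬ c ∈ s := Finset.mem_compl.mp hcm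
      apply CGate_base hN4 a0 s hs _ c hc
      intro r r' _
      simp
    · have hsub : ∀ q ∈ S, q = q₀ := by
        intro q hq
        exact Finset.card_le_one.mp hS1 q hq q₀ hq₀
      apply CGate_base hN4 a0 s hs _ q₀.1 q₀.2
      intro r r' hrr
      have hrr' : r q₀ = r' q₀ := hrr
      constructor
      · intro hr q hq
        have hqe := hsub q hq
        subst hqe
        rw [← hrr']
        exact hr q hq
      · intro hr q hq
        have hqe := hsub q hq
        subst hqe
        rw [hrr']
        exact hr q hq
  intro m
  induction m with
  | zero =>
      intro S v Y hcard hor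
      exact hbase S v Y (by omega)
  | succ m ih =>
      intro S v Y hcard hor
      by_cases h1 : S.card ≤ 1
      · exact hbase S v Y h1
      · have hsign : Equiv.Perm.sign Y = 1 := hor.resolve_left h1
        obtain ⟨q₀, hq₀⟩ : S.Nonempty := Finset.card_pos.mp (by omega)
        have key : ∀ Y' : Perm ({ i // i ∈ s } → A), Equiv.Perm.sign Y' = 1 →
            CGate s (fun r => ∀ q ∈ S, r q = v q) Y' ∈ Hgrp A N := by
          intro Y' hY'
          have hmem : Y' ∈ alternatingGroup ({ i // i ∈ s } → A) :=
            Equiv.Perm.mem_alternatingGroup.mpr hY'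
          rw [← Equiv.Perm.closure_three_cycles_eq_alternating] at hmem
          refine Subgroup.closure_induction ?_ ?_ ?_ ?_ hmem
          · -- three-cycles
            intro Y'' hY''
            obtain ⟨a, b, c, hab, hbc, hca, rfl⟩ := IsThreeCycle.exists_cyc3 hY''
            obtain ⟨d, hda, hdb, hdc⟩ := exists_fourth hβ a b c
            rw [cyc3_commutator hab hbc hca hda hdb hdc]
            have hsplit : ∀ r : { i // ¬ i ∈ s } → A, ((∀ q ∈ ({q₀} : Finset _), r q = v q)
                ∧ (∀ q ∈ S.erase q₀, r q = v q)) ↔ (∀ q ∈ S, r q = v q) := by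
              intro r
              constructor
              · rintro ⟨hA1, hB1⟩ q hq
                by_cases hqq : q = q₀
                · subst hqq; exact hA1 q (Finset.mem_singleton_self q)
                · exact hB1 q (Finset.mem_erase.mpr ⟨hqq, hq⟩)
              · intro h
                constructor
                · intro q hq
                  rw [Finset.mem_singleton] at hq
                  subst hq
                  exact h q hq₀
                · intro q hq
                  exact h q (Finset.mem_of_mem_erase hq)
            rw [← CGate_congr s hsplit, ← CGate_commutator]
            have hP : CGate s (fun r => ∀ q ∈ ({q₀} : Finset _), r q = v q)
                (Equiv.swap b c) ∈ Hgrp A N := hbase {q₀} v _ (by simp)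
            have hQcard : (S.erase q₀).card ≤ m := by
              rw [Finset.card_erase_of_mem hq₀]
              omega
            have hQ : CGate s (fun r => ∀ q ∈ S.erase q₀, r q = v q)
                (cyc3 a d b) ∈ Hgrp A N := by
              apply ih (S.erase q₀) v _ hQcard
              right
              exact (cyc3_isThreeCycle (Ne.symm hda) hdb (Ne.symm hab)).sign
            rw [commutatorElement_def]
            exact mul_mem (mul_mem (mul_mem hP hQ) (inv_mem hP)) (inv_mem hQ)
          · rw [CGate_one]
            exact one_mem _
          · intro Ya Yb _ _ hYa hYb
            rw [CGate_mul]
            exact mul_mem hYa hYb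
          · intro Ya _ hYa
            rw [← CGate_inv]
            exact inv_mem hYa
        exact key Y hsign

end Part7
section Part8
open Equiv Function Equiv.Perm
open scoped Classical

set_option linter.unusedSectionVars false
set_option linter.unusedVariables false

variable {A : Type*} [Fintype A] [DecidableEq A] {N : ℕ}

lemma cyc3_local_mem (hN4 : 4 ≤ N) (hA2 : 2 ≤ Fintype.card A) (x y z : Fin N → A)
    (hxy : x ≠ y) (hyz : y ≠ z) (hzx : z ≠ x)
    (s : Finset (Fin N)) (hs : s.card = 3)
    (hagree : ∀ i, ¬ i ∈ s → x i = y i ∧ y i = z i) :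
    cyc3 x y z ∈ Hgrp A N := by
  have hA0 : Nonempty A := Fintype.card_pos_iff.mp (by omega)
  obtain ⟨a0⟩ := hA0
  have hagree_xy : ∀ i, ¬ i ∈ s → x i = y i := fun i h => (hagree i h).1
  have hagree_yz : ∀ i, ¬ i ∈ s → y i = z i := fun i h => (hagree i h).2
  have hagree_xz : ∀ i, ¬ i ∈ s → x i = z i :=
    fun i h => ((hagree i h).1).trans (hagree i h).2
  set xh : { i // i ∈ s } → A := fun j => x j.1 with hxhdef
  set yh : { i // i ∈ s } → A := fun j => y j.1 with hyhdef
  set zh : { i // i ∈ s } → A := fun j => z j.1 with hzhdef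
  have hxyh : xh ≠ yh := by
    intro h
    apply hxy
    funext i
    by_cases hi : i ∈ s
    · exact congrFun h ⟨i, hi⟩
    · exact hagree_xy i hi
  have hyzh : yh ≠ zh := by
    intro h
    apply hyz
    funext i
    by_cases hi : i ∈ s
    · exact congrFun h ⟨i, hi⟩
    · exact hagree_yz i hi
  have hzxh : zh ≠ xh := by
    intro h
    apply hzx
    funext i
    by_cases hi : i ∈ s
    · exact congrFun h ⟨i, hi⟩
    · exact (hagree_xz i hi).symm
  set Y : Perm ({ i // i ∈ s } → A) := cyc3 xh yh zh with hYdef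
  set v : { i // ¬ i ∈ s } → A := fun q => x q.1 with hvdef
  set E : ({ i // ¬ i ∈ s } → A) → Prop :=
    fun r => ∀ q ∈ (Finset.univ : Finset { i // ¬ i ∈ s }), r q = v q with hEdef
  have hmem : CGate s E Y ∈ Hgrp A N := by
    have hβ : 4 ≤ Fintype.card ({ i // i ∈ s } → A) := by
      rw [Fintype.card_fun]
      have hcs : Fintype.card { i // i ∈ s } = 3 := by
        rw [Fintype.card_coe, hs]
      rw [hcs]
      calc 4 ≤ 2 ^ 3 := by norm_num
        _ ≤ Fintype.card A ^ 3 := Nat.pow_le_pow_left hA2 3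
    apply CGate_mem_pattern hN4 a0 s hs hβ (Finset.univ.card) Finset.univ v Y le_rfl
    right
    exact (cyc3_isThreeCycle hxyh hyzh hzxh).sign
  have heq : cyc3 x y z = CGate s E Y := by
    refine Equiv.ext fun t => ?_
    by_cases hrt : ∀ q : { i // ¬ i ∈ s }, t q.1 = x q.1
    · have hEt : E (fun j : { i // ¬ i ∈ s } => t j.1) := fun q _ => hrt q
      by_cases hwx : (fun j : { i // i ∈ s } => t j.1) = xh
      · have ht : t = x := by
          funext i
          by_cases hi : i ∈ s
          · exact congrFun hwx ⟨i, hi⟩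
          · exact hrt ⟨i, hi⟩
        subst ht
        rw [cyc3_apply_fst hxy hyz]
        have hEx : E (fun j : { i // ¬ i ∈ s } => t j.1) := hEt
        funext i
        by_cases hi : i ∈ s
        · rw [CGate_apply_mem s E Y t hi, if_pos hEx]
          show y i = Y (fun j => t j.1) ⟨i, hi⟩
          have : (fun j : { i // i ∈ s } => t j.1) = xh := hwx
          rw [this, hYdef, cyc3_apply_fst hxyh hyzh]
        · rw [CGate_apply_notMem s E Y t hi]
          exact (hagree_xy i hi).symm
      by_cases hwy : (fun j : { i // i ∈ s } => t j.1) = yh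
      · have ht : t = y := by
          funext i
          by_cases hi : i ∈ s
          · exact congrFun hwy ⟨i, hi⟩
          · exact (hrt ⟨i, hi⟩).trans (hagree_xy i hi)
        subst ht
        rw [cyc3_apply_snd hxy]
        funext i
        by_cases hi : i ∈ s
        · rw [CGate_apply_mem s E Y t hi, if_pos hEt]
          show z i = Y (fun j => t j.1) ⟨i, hi⟩
          rw [hwy, hYdef, cyc3_apply_snd hxyh]
        · rw [CGate_apply_notMem s E Y t hi]
          exact (hagree_yz i hi).symm
      by_cases hwz : (fun j : { i // i ∈ s } => t j.1) = zh
      · have ht : t = z := by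
          funext i
          by_cases hi : i ∈ s
          · exact congrFun hwz ⟨i, hi⟩
          · exact (hrt ⟨i, hi⟩).trans (hagree_xz i hi)
        subst ht
        rw [cyc3_apply_trd hyz hzx]
        funext i
        by_cases hi : i ∈ s
        · rw [CGate_apply_mem s E Y t hi, if_pos hEt]
          show x i = Y (fun j => t j.1) ⟨i, hi⟩
          rw [hwz, hYdef, cyc3_apply_trd hyzh hzxh]
        · rw [CGate_apply_notMem s E Y t hi]
          exact hagree_xz i hi
      · -- t is none of x, y, z
        have htx : t ≠ x := by
          intro h; apply hwx; subst h; rfl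
        have hty : t ≠ y := by
          intro h; apply hwy; subst h; rfl
        have htz : t ≠ z := by
          intro h; apply hwz; subst h; rfl
        rw [cyc3_apply_of_ne htx hty htz]
        funext i
        by_cases hi : i ∈ s
        · rw [CGate_apply_mem s E Y t hi, if_pos hEt]
          show t i = Y (fun j => t j.1) ⟨i, hi⟩
          rw [hYdef, cyc3_apply_of_ne hwx hwy hwz]
        · rw [CGate_apply_notMem s E Y t hi]
    · have hEt : ¬ E (fun j : { i // ¬ i ∈ s } => t j.1) := by
        intro hEE
        exact hrt (fun q => hEE q (Finset.mem_univ q))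
      have htx : t ≠ x := by
        rintro rfl
        exact hrt (fun q => rfl)
      have hty : t ≠ y := by
        rintro rfl
        exact hrt (fun q => (hagree_xy q.1 q.2).symm)
      have htz : t ≠ z := by
        rintro rfl
        exact hrt (fun q => (hagree_xz q.1 q.2).symm)
      rw [cyc3_apply_of_ne htx hty htz]
      funext i
      by_cases hi : i ∈ s
      · rw [CGate_apply_mem s E Y t hi, if_neg hEt]
      · rw [CGate_apply_notMem s E Y t hi]
  rw [heq]
  exact hmem

end Part8
section Part9
open Equiv Function Equiv.Perm
open scoped Classical

set_option linter.unusedSectionVars false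
set_option linter.unusedVariables false
set_option maxHeartbeats 1000000

lemma injective_pair {γ : Type*} {p q : γ} (h : p ≠ q) : Injective ![p, q] := by
  intro a b hab
  fin_cases a <;> fin_cases b <;> simp_all

lemma injective_triple {γ : Type*} {p q r : γ} (hpq : p ≠ q) (hpr : p ≠ r) (hqr : q ≠ r) :
    Injective ![p, q, r] := by
  intro a b hab
  fin_cases a <;> fin_cases b <;> simp_all

variable {A : Type*} [Fintype A] [DecidableEq A] {N : ℕ}

lemma cyc3_mem_aux (hN4 : 4 ≤ N) (hA2 : 2 ≤ Fintype.card A) :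
    ∀ (d : ℕ) (x y z : Fin N → A), x ≠ y → y ≠ z → z ≠ x →
      (Finset.univ.filter (fun c => ¬(x c = y c ∧ y c = z c))).card ≤ d →
      cyc3 x y z ∈ Hgrp A N := by
  have hNcard : Fintype.card (Fin N) = N := Fintype.card_fin N
  have hlocal : ∀ (x y z : Fin N → A), x ≠ y → y ≠ z → z ≠ x →
      (Finset.univ.filter (fun c => ¬(x c = y c ∧ y c = z c))).card ≤ 3 →
      cyc3 x y z ∈ Hgrp A N := by
    intro x y z hxy hyz hzx hD3
    obtain ⟨s', hsub, _, hcard'⟩ := Finset.exists_subsuperset_card_eq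
      (Finset.subset_univ _) hD3 (by rw [Finset.card_univ, hNcard]; omega)
    apply cyc3_local_mem hN4 hA2 x y z hxy hyz hzx s' hcard'
    intro c hc
    by_contra hcon
    exact hc (hsub (Finset.mem_filter.mpr ⟨Finset.mem_univ c, hcon⟩))
  intro d
  induction d with
  | zero =>
      intro x y z hxy hyz hzx hD
      exact hlocal x y z hxy hyz hzx (by omega)
  | succ d ih =>
      intro x y z hxy hyz hzx hD
      by_cases hD3 : (Finset.univ.filter (fun c => ¬(x c = y c ∧ y c = z c))).card ≤ 3
      · exact hlocal x y z hxy hyz hzx hD3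
      · set D := Finset.univ.filter (fun c => ¬(x c = y c ∧ y c = z c)) with hDdef
        have himem : ∀ c, c ∈ D ↔ ¬(x c = y c ∧ y c = z c) := by
          intro c
          rw [hDdef, Finset.mem_filter]
          simp
        have hD4 : 4 ≤ D.card := by omega
        obtain ⟨i, hiD⟩ : D.Nonempty := Finset.card_pos.mp (by omega)
        obtain ⟨j, hjD'⟩ : (D.erase i).Nonempty := Finset.card_pos.mp
          (by rw [Finset.card_erase_of_mem hiD]; omega)
        have hji : j ≠ i := (Finset.mem_erase.mp hjD').1
        have hjD : j ∈ D := (Finset.mem_erase.mp hjD').2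
        obtain ⟨k, hkD''⟩ : ((D.erase i).erase j).Nonempty := Finset.card_pos.mp
          (by rw [Finset.card_erase_of_mem hjD', Finset.card_erase_of_mem hiD]; omega)
        have hkj : k ≠ j := (Finset.mem_erase.mp hkD'').1
        have hkD1 : k ∈ D.erase i := (Finset.mem_erase.mp hkD'').2
        have hki : k ≠ i := (Finset.mem_erase.mp hkD1).1
        have hkD : k ∈ D := (Finset.mem_erase.mp hkD1).2
        have hlne : (Finset.univ \ ({i, j, k} : Finset (Fin N))).Nonempty := by
          apply Finset.card_pos.mp
          have h3 : ({i, j, k} : Finset (Fin N)).card ≤ 3 := by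
            apply le_trans (Finset.card_insert_le _ _)
            apply Nat.succ_le_succ
            apply le_trans (Finset.card_insert_le _ _)
            simp
          have hsd := Finset.le_card_sdiff ({i, j, k} : Finset (Fin N))
            (Finset.univ : Finset (Fin N))
          have hcu : (Finset.univ : Finset (Fin N)).card = N := by
            rw [Finset.card_univ, hNcard]
          omega
        obtain ⟨l, hlmem⟩ := hlne
        have hl3 : l ∉ ({i, j, k} : Finset (Fin N)) := (Finset.mem_sdiff.mp hlmem).2
        simp only [Finset.mem_insert, Finset.mem_singleton] at hl3
        push_neg at hl3
        obtain ⟨hli, hlj, hlk⟩ := hl3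
        have hij : i ≠ j := Ne.symm hji
        have hik : i ≠ k := Ne.symm hki
        have hil : i ≠ l := Ne.symm hli
        have hjk : j ≠ k := Ne.symm hkj
        have hjl : j ≠ l := Ne.symm hlj
        have hkl : k ≠ l := Ne.symm hlk
        set w : Fin 4 → Fin N := ![i, j, k, l] with hwdef
        have hw : Injective w := by
          intro a b hab2
          fin_cases a <;> fin_cases b <;> first | rfl | exact absurd hab2 (by assumption)
        obtain ⟨a0, b0, hab0⟩ := Fintype.exists_pair_of_one_lt_card (α := A) (by omega)
        -- main step given a window permutation merging slots 2 and 3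
        have main : ∀ (σ : Perm (Fin 4 → A)) (c₁ c₂ c₃ : Fin 4 → A),
            σ (x ∘ w) = c₁ → σ (y ∘ w) = c₂ → σ (z ∘ w) = c₃ →
            c₁ 2 = c₂ 2 → c₂ 2 = c₃ 2 → c₁ 3 = c₂ 3 → c₂ 3 = c₃ 3 →
            cyc3 x y z ∈ Hgrp A N := by
          intro σ c₁ c₂ c₃ hc1 hc2 hc3 h122 h223 h123 h233
          set g := applyAt hN4 w hw σ with hgdef
          have hg : g ∈ Hgrp A N := applyAt_mem hN4 w hw σ
          have hgx : ∀ m : Fin 4, g x (w m) = c₁ m := by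
            intro m; rw [hgdef, applyAt_apply_at, hc1]
          have hgy : ∀ m : Fin 4, g y (w m) = c₂ m := by
            intro m; rw [hgdef, applyAt_apply_at, hc2]
          have hgz : ∀ m : Fin 4, g z (w m) = c₃ m := by
            intro m; rw [hgdef, applyAt_apply_at, hc3]
          have hgxy : g x ≠ g y := fun h => hxy (g.injective h)
          have hgyz : g y ≠ g z := fun h => hyz (g.injective h)
          have hgzx : g z ≠ g x := fun h => hzx (g.injective h)
          have hsub' : (Finset.univ.filter
              (fun c => ¬(g x c = g y c ∧ g y c = g z c))) ⊆ D.erase k := by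
            intro c hc
            have hc' : ¬(g x c = g y c ∧ g y c = g z c) :=
              (Finset.mem_filter.mp hc).2
            rw [Finset.mem_erase]
            constructor
            · intro hck
              subst hck
              apply hc'
              constructor
              · show g x (w 2) = g y (w 2)
                rw [hgx 2, hgy 2, h122]
              · show g y (w 2) = g z (w 2)
                rw [hgy 2, hgz 2, h223]
            · by_contra hcD
              have hag : x c = y c ∧ y c = z c :=
                not_not.mp (fun hno => hcD ((himem c).mpr hno))
              by_cases hcr : c ∈ Set.range w
              · obtain ⟨m, rfl⟩ := hcr
                fin_cases m
                · exact hcD hiD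
                · exact hcD hjD
                · exact hcD hkD
                · apply hc'
                  constructor
                  · show g x (w 3) = g y (w 3)
                    rw [hgx 3, hgy 3, h123]
                  · show g y (w 3) = g z (w 3)
                    rw [hgy 3, hgz 3, h233]
              · apply hc'
                rw [hgdef, applyAt_apply_notMem hN4 w hw σ x c hcr,
                  applyAt_apply_notMem hN4 w hw σ y c hcr,
                  applyAt_apply_notMem hN4 w hw σ z c hcr]
                exact hag
          have hcard' : (Finset.univ.filter
              (fun c => ¬(g x c = g y c ∧ g y c = g z c))).card ≤ d := by
            have h1 := Finset.card_le_card hsub'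
            rw [Finset.card_erase_of_mem hkD] at h1
            omega
          have hres := ih (g x) (g y) (g z) hgxy hgyz hgzx hcard'
          have hfin : cyc3 x y z = g⁻¹ * cyc3 (g x) (g y) (g z) * g := by
            rw [← cyc3_conj g x y z]
            group
          rw [hfin]
          exact mul_mem (mul_mem (inv_mem hg) hres) hg
        -- choose the window permutation
        set u1 : Fin 4 → A := fun _ => a0 with hu1def
        set u2 : Fin 4 → A := Function.update u1 0 b0 with hu2def
        set u3 : Fin 4 → A := Function.update u1 1 b0 with hu3def
        have hu1v : ∀ m : Fin 4, u1 m = a0 := fun m => rfl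
        have hu2v : ∀ m : Fin 4, m ≠ 0 → u2 m = a0 := by
          intro m hm
          rw [hu2def, Function.update_of_ne hm]
        have hu3v : ∀ m : Fin 4, m ≠ 1 → u3 m = a0 := by
          intro m hm
          rw [hu3def, Function.update_of_ne hm]
        have hu20 : u2 0 = b0 := by rw [hu2def]; simp
        have hu31 : u3 1 = b0 := by rw [hu3def]; simp
        have h12 : u1 ≠ u2 := by
          intro h
          apply hab0
          rw [← hu1v 0, h, hu20]
        have h13 : u1 ≠ u3 := by
          intro h
          apply hab0
          rw [← hu1v 1, h, hu31]
        have h23 : u2 ≠ u3 := by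
          intro h
          apply hab0
          rw [← hu2v 1 (by decide), h, hu31]
        have hiDprop : ¬(x i = y i ∧ y i = z i) := (himem i).mp hiD
        by_cases hpxy : x ∘ w = y ∘ w
        · by_cases hpyz : y ∘ w = z ∘ w
          · exact absurd ⟨congrFun hpxy 0, congrFun hpyz 0⟩ hiDprop
          · have hpxz : x ∘ w ≠ z ∘ w := by rw [hpxy]; exact hpyz
            obtain ⟨σ, hσ⟩ := exists_perm_comp ![x ∘ w, z ∘ w] ![u1, u2]
              (injective_pair hpxz) (injective_pair h12)
            have e1 : σ (x ∘ w) = u1 := hσ 0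
            have e3 : σ (z ∘ w) = u2 := hσ 1
            have e2 : σ (y ∘ w) = u1 := by rw [← hpxy]; exact e1
            refine main σ u1 u1 u2 e1 e2 e3 rfl ?_ rfl ?_
            · rw [hu1v 2, hu2v 2 (by decide)]
            · rw [hu1v 3, hu2v 3 (by decide)]
        · by_cases hpyz : y ∘ w = z ∘ w
          · obtain ⟨σ, hσ⟩ := exists_perm_comp ![x ∘ w, y ∘ w] ![u2, u1]
              (injective_pair hpxy) (injective_pair (Ne.symm h12))
            have e1 : σ (x ∘ w) = u2 := hσ 0
            have e2 : σ (y ∘ w) = u1 := hσ 1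
            have e3 : σ (z ∘ w) = u1 := by rw [← hpyz]; exact e2
            refine main σ u2 u1 u1 e1 e2 e3 ?_ rfl ?_ rfl
            · rw [hu1v 2, hu2v 2 (by decide)]
            · rw [hu1v 3, hu2v 3 (by decide)]
          · by_cases hpxz : x ∘ w = z ∘ w
            · obtain ⟨σ, hσ⟩ := exists_perm_comp ![x ∘ w, y ∘ w] ![u1, u2]
                (injective_pair hpxy) (injective_pair h12)
              have e1 : σ (x ∘ w) = u1 := hσ 0
              have e2 : σ (y ∘ w) = u2 := hσ 1
              have e3 : σ (z ∘ w) = u1 := by rw [← hpxz]; exact e1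
              refine main σ u1 u2 u1 e1 e2 e3 ?_ ?_ ?_ ?_
              · rw [hu1v 2, hu2v 2 (by decide)]
              · rw [hu1v 2, hu2v 2 (by decide)]
              · rw [hu1v 3, hu2v 3 (by decide)]
              · rw [hu1v 3, hu2v 3 (by decide)]
            · obtain ⟨σ, hσ⟩ := exists_perm_comp ![x ∘ w, y ∘ w, z ∘ w] ![u1, u2, u3]
                (injective_triple hpxy hpxz hpyz) (injective_triple h12 h13 h23)
              have e1 : σ (x ∘ w) = u1 := hσ 0
              have e2 : σ (y ∘ w) = u2 := hσ 1
              have e3 : σ (z ∘ w) = u3 := hσ 2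
              refine main σ u1 u2 u3 e1 e2 e3 ?_ ?_ ?_ ?_
              · rw [hu1v 2, hu2v 2 (by decide)]
              · rw [hu2v 2 (by decide), hu3v 2 (by decide)]
              · rw [hu1v 3, hu2v 3 (by decide)]
              · rw [hu2v 3 (by decide), hu3v 3 (by decide)]

lemma cyc3_mem (hN4 : 4 ≤ N) (hA2 : 2 ≤ Fintype.card A) (x y z : Fin N → A)
    (hxy : x ≠ y) (hyz : y ≠ z) (hzx : z ≠ x) : cyc3 x y z ∈ Hgrp A N :=
  cyc3_mem_aux hN4 hA2 _ x y z hxy hyz hzx le_rfl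

end Part9
section Final
open Equiv Function Equiv.Perm

/-- For `|A| ≥ 2`, `n ≥ 4` and any `f ∈ Sym(A^n)`, the permutation `f ⊕ id` of
`A^(n+1)` belongs to the subgroup of `Sym(A^(n+1))` generated by all extensions to arity `n+1`
of permutations of `A^4`. -/
theorem stmt2 (A : Type*) [Fintype A] [DecidableEq A] (hA : 2 ≤ Fintype.card A)
    (n : ℕ) (hn : 4 ≤ n) (f : Equiv.Perm (Fin n → A)) :
    oplusId (Nat.le_succ n) f ∈ Subgroup.closure
      {g : Equiv.Perm (Fin (n + 1) → A) | ∃ p : Equiv.Perm (Fin 4 → A), IsExtensionOf p g} := by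
  have hN4 : 4 ≤ n + 1 := by omega
  show oplusId (Nat.le_succ n) f ∈ Hgrp A (n + 1)
  have hAlt : ∀ σ : Perm (Fin (n + 1) → A), Equiv.Perm.sign σ = 1 → σ ∈ Hgrp A (n + 1) := by
    intro σ hσ
    have hmem : σ ∈ alternatingGroup (Fin (n + 1) → A) :=
      Equiv.Perm.mem_alternatingGroup.mpr hσ
    rw [← Equiv.Perm.closure_three_cycles_eq_alternating] at hmem
    refine Subgroup.closure_induction ?_ ?_ ?_ ?_ hmem
    · intro τ hτ
      obtain ⟨a, b, c, hab, hbc, hca, rfl⟩ := IsThreeCycle.exists_cyc3 hτ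
      exact cyc3_mem hN4 hA a b c hab hbc hca
    · exact one_mem _
    · intro p q _ _ hp hq
      exact mul_mem hp hq
    · intro p _ hp
      exact inv_mem hp
  by_cases hsgn : Equiv.Perm.sign (oplusId (Nat.le_succ n) f) = 1
  · exact hAlt _ hsgn
  · have hsgn' : Equiv.Perm.sign (oplusId (Nat.le_succ n) f) = -1 := by
      rcases Int.units_eq_one_or (Equiv.Perm.sign (oplusId (Nat.le_succ n) f)) with h | h
      · exact absurd h hsgn
      · exact h
    have hsf := sign_oplusId (Nat.le_succ n) f
    have hexp : n + 1 - n = 1 := by omega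
    rw [hexp, pow_one] at hsf
    have hodd : Odd (Fintype.card A) := by
      by_contra heven
      rw [Nat.not_odd_iff_even] at heven
      obtain ⟨t, ht⟩ := heven
      have hpow : Equiv.Perm.sign f ^ Fintype.card A = 1 := by
        rw [ht, pow_add]
        exact Int.units_mul_self _
      rw [hpow] at hsf
      exact hsgn (hsf)
    obtain ⟨u, v, huv⟩ := Fintype.exists_pair_of_one_lt_card (α := Fin 4 → A)
      (by
        rw [Fintype.card_fun]
        have h1 : (1 : ℕ) < Fintype.card A := by omega
        have := Nat.one_lt_pow (n := Fintype.card (Fin 4)) (by simp) h1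
        simpa using this)
    have hg0mem : oplusId hN4 (Equiv.swap u v) ∈ Hgrp A (n + 1) := by
      apply Subgroup.subset_closure
      refine ⟨Equiv.swap u v, hN4, 1, ?_⟩
      rw [wirePerm_one]
      group
    have hsq0 : Equiv.Perm.sign (oplusId hN4 (Equiv.swap u v)) = -1 := by
      rw [sign_oplusId, Equiv.Perm.sign_swap huv]
      exact Odd.neg_one_pow (hodd.pow)
    have hprod : Equiv.Perm.sign
        (oplusId (Nat.le_succ n) f * oplusId hN4 (Equiv.swap u v)) = 1 := by
      rw [map_mul, hsgn', hsq0]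
      decide
    have hmem2 := hAlt _ hprod
    have hfin : oplusId (Nat.le_succ n) f =
        (oplusId (Nat.le_succ n) f * oplusId hN4 (Equiv.swap u v)) *
          (oplusId hN4 (Equiv.swap u v))⁻¹ := by group
    rw [hfin]
    exact mul_mem hmem2 (inv_mem hg0mem)

end Final
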